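/- arXiv:chao-dyn/9801016 — 2 statements merged into one kernel-verified Lean document; each statement's English description precedes it below -/
import Mathlib

section
/- If the forcing vanishes, i.e. μ'(t)(M) = −μ(t)(ξ(t)·M − M·ξ(t)) for all t and all matrices M, then for every fixed matrix η ∈ Matrix (n×n, ℝ) the function t ↦ μ(t)(g(t) · η · g(t)⁻¹) is constant (Noether conservation of the Kelvin quantity). -/
attribute [local instance] Matrix.normedAddCommGroup Matrix.normedSpace

open Matrix Finset

lemma hasDerivAt_matrix {n : ℕ} {f : ℝ → Matrix (Fin n) (Fin n) ℝ}
    {f' : Matrix (Fin n) (Fin n) ℝ} {t : ℝ} :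
    HasDerivAt f f' t ↔ ∀ i j, HasDerivAt (fun τ => f τ i j) (f' i j) t := by
  exact hasDerivAt_pi.trans (forall_congr' fun i => hasDerivAt_pi)

lemma HasDerivAt.matrix_mul {n : ℕ} {f h : ℝ → Matrix (Fin n) (Fin n) ℝ}
    {f' h' : Matrix (Fin n) (Fin n) ℝ} {t : ℝ}
    (hf : HasDerivAt f f' t) (hh : HasDerivAt h h' t) :
    HasDerivAt (fun τ => f τ * h τ) (f' * h t + f t * h') t := by
  rw [hasDerivAt_matrix] at hf hh ⊢
  intro i j
  simp only [Matrix.mul_apply, Matrix.add_apply]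
  rw [← Finset.sum_add_distrib]
  exact HasDerivAt.fun_sum fun k _ => ((hf i k).mul (hh k j))

lemma differentiableAt_det {n : ℕ} {M : ℝ → Matrix (Fin n) (Fin n) ℝ} {t : ℝ}
    (hM : ∀ i j, DifferentiableAt ℝ (fun τ => M τ i j) t) :
    DifferentiableAt ℝ (fun τ => (M τ).det) t := by
  simp only [Matrix.det_apply']
  exact DifferentiableAt.fun_sum fun σ _ =>
    (differentiableAt_const _).mul (DifferentiableAt.fun_finsetProd fun i _ => hM (σ i) i)

lemma linear_apply_eq_sum {n : ℕ} (L : Matrix (Fin n) (Fin n) ℝ →ₗ[ℝ] ℝ)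
    (A : Matrix (Fin n) (Fin n) ℝ) :
    L A = ∑ i : Fin n, ∑ j : Fin n, A i j * L (Matrix.single i j 1) := by
  conv_lhs => rw [matrix_eq_sum_single A]
  rw [map_sum]
  refine Finset.sum_congr rfl fun i _ => ?_
  rw [map_sum]
  refine Finset.sum_congr rfl fun j _ => ?_
  have : Matrix.single i j (A i j) = A i j • Matrix.single i j (1:ℝ) := by
    rw [smul_single, smul_eq_mul, mul_one]
  rw [this, _root_.map_smul, smul_eq_mul]


/-- Noether conservation of the Kelvin quantity: if `g' = ξ·g` with
`g(t)` invertible and `μ(t)` is a differentiable curve of linear functionals on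
matrices satisfying the unforced Euler–Poincaré equation `μ'(M) = −μ(ξM − Mξ)`,
then for every fixed matrix `η` the function `t ↦ μ(t)(g(t) η g(t)⁻¹)` is constant. -/
theorem stmt6 {n : ℕ}
    (g ξ : ℝ → Matrix (Fin n) (Fin n) ℝ)
    (hξcont : Continuous ξ)
    (hginv : ∀ t, IsUnit (g t))
    (hg : ∀ t, HasDerivAt g (ξ t * g t) t)
    (μ dμ : ℝ → Matrix (Fin n) (Fin n) ℝ →ₗ[ℝ] ℝ)
    (hμ : ∀ (t : ℝ) (M : Matrix (Fin n) (Fin n) ℝ), HasDerivAt (fun τ => μ τ M) (dμ t M) t)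
    (hEP : ∀ (t : ℝ) (M : Matrix (Fin n) (Fin n) ℝ),
      dμ t M = -μ t (ξ t * M - M * ξ t)) :
    ∀ (η : Matrix (Fin n) (Fin n) ℝ) (t t' : ℝ),
      μ t (g t * η * (g t)⁻¹) = μ t' (g t' * η * (g t')⁻¹) := by
  intro η t0 t1
  have hdetu : ∀ t, IsUnit (g t).det := fun t => (Matrix.isUnit_iff_isUnit_det _).mp (hginv t)
  have hdetne : ∀ t, (g t).det ≠ 0 := fun t => (hdetu t).ne_zero
  have hgent : ∀ (t : ℝ) (i j : Fin n), DifferentiableAt ℝ (fun τ => g τ i j) t :=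
    fun t i j => ((hasDerivAt_matrix.mp (hg t)) i j).differentiableAt
  -- entries of the inverse are differentiable
  have hinvdiff : ∀ (t : ℝ) (i j : Fin n), DifferentiableAt ℝ (fun τ => (g τ)⁻¹ i j) t := by
    intro t i j
    have heq : (fun τ => (g τ)⁻¹ i j) = fun τ => ((g τ).det)⁻¹ * (g τ).adjugate i j := by
      funext τ
      rw [Matrix.inv_def, Matrix.smul_apply, Ring.inverse_eq_inv', smul_eq_mul]
    rw [heq]
    have hadj : DifferentiableAt ℝ (fun τ => (g τ).adjugate i j) t := by
      have h2 : (fun τ => (g τ).adjugate i j)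
          = fun τ => ((g τ).updateRow j (Pi.single i 1)).det := by
        funext τ; rw [Matrix.adjugate_apply]
      rw [h2]
      apply differentiableAt_det
      intro a b
      by_cases hab : a = j
      · simpa [Matrix.updateRow_apply, hab] using differentiableAt_const _
      · simpa [Matrix.updateRow_apply, hab] using hgent t a b
    exact ((differentiableAt_det (hgent t)).inv (hdetne t)).mul hadj
  -- derivative of the inverse
  have hinv' : ∀ t, HasDerivAt (fun τ => (g τ)⁻¹) (-((g t)⁻¹ * ξ t)) t := by
    intro t
    set D : Matrix (Fin n) (Fin n) ℝ := fun i j => deriv (fun τ => (g τ)⁻¹ i j) t with hD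
    have hDd : HasDerivAt (fun τ => (g τ)⁻¹) D t := by
      rw [hasDerivAt_matrix]; intro i j; exact (hinvdiff t i j).hasDerivAt
    have h1 : HasDerivAt (fun τ => g τ * (g τ)⁻¹) (ξ t * g t * (g t)⁻¹ + g t * D) t :=
      (hg t).matrix_mul hDd
    have h2 : (fun τ => g τ * (g τ)⁻¹) = fun _ => (1 : Matrix (Fin n) (Fin n) ℝ) :=
      funext fun τ => Matrix.mul_nonsing_inv _ (hdetu τ)
    rw [h2] at h1
    have h3 := h1.unique (hasDerivAt_const t 1)
    rw [mul_assoc, Matrix.mul_nonsing_inv _ (hdetu t), mul_one] at h3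
    have h4 : g t * D = -(ξ t) := eq_neg_of_add_eq_zero_right h3
    have hDval : D = -((g t)⁻¹ * ξ t) := by
      calc D = ((g t)⁻¹ * g t) * D := by rw [Matrix.nonsing_inv_mul _ (hdetu t), one_mul]
        _ = (g t)⁻¹ * (g t * D) := by rw [mul_assoc]
        _ = (g t)⁻¹ * (-(ξ t)) := by rw [h4]
        _ = -((g t)⁻¹ * ξ t) := by rw [mul_neg]
    rwa [hDval] at hDd
  -- derivative of K τ = g τ * η * (g τ)⁻¹
  have hK : ∀ t, HasDerivAt (fun τ => g τ * η * (g τ)⁻¹)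
      (ξ t * (g t * η * (g t)⁻¹) - (g t * η * (g t)⁻¹) * ξ t) t := by
    intro t
    have h1 : HasDerivAt (fun τ => g τ * η) (ξ t * g t * η + g t * 0) t :=
      (hg t).matrix_mul (hasDerivAt_const t η)
    rw [mul_zero, add_zero] at h1
    have h2 := h1.matrix_mul (hinv' t)
    convert h2 using 1
    simp only [mul_neg, sub_eq_add_neg, mul_assoc]
  -- the conserved quantity has zero derivative
  have hF : ∀ t, HasDerivAt (fun τ => μ τ (g τ * η * (g τ)⁻¹)) 0 t := by
    intro t
    set K : ℝ → Matrix (Fin n) (Fin n) ℝ := fun τ => g τ * η * (g τ)⁻¹ with hKdef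
    set K' : Matrix (Fin n) (Fin n) ℝ := ξ t * K t - K t * ξ t with hK'def
    have hKent := hasDerivAt_matrix.mp (hK t)
    have heq : (fun τ => μ τ (K τ))
        = fun τ => ∑ i : Fin n, ∑ j : Fin n, K τ i j * μ τ (Matrix.single i j 1) :=
      funext fun τ => linear_apply_eq_sum _ _
    have hsum : HasDerivAt
        (fun τ => ∑ i : Fin n, ∑ j : Fin n, K τ i j * μ τ (Matrix.single i j 1))
        (∑ i : Fin n, ∑ j : Fin n,
          (K' i j * μ t (Matrix.single i j 1) + K t i j * dμ t (Matrix.single i j 1))) t :=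
      HasDerivAt.fun_sum fun i _ => HasDerivAt.fun_sum fun j _ => (hKent i j).mul (hμ t _)
    have hzero : (∑ i : Fin n, ∑ j : Fin n,
        (K' i j * μ t (Matrix.single i j 1) + K t i j * dμ t (Matrix.single i j 1))) = 0 := by
      have e : (∑ i : Fin n, ∑ j : Fin n,
          (K' i j * μ t (Matrix.single i j 1) + K t i j * dμ t (Matrix.single i j 1)))
          = μ t K' + dμ t (K t) := by
        rw [linear_apply_eq_sum (μ t) K', linear_apply_eq_sum (dμ t) (K t),
          ← Finset.sum_add_distrib]
        refine Finset.sum_congr rfl fun i _ => ?_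
        rw [← Finset.sum_add_distrib]
      rw [e, hEP, hK'def, add_neg_cancel]
    show HasDerivAt (fun τ => μ τ (K τ)) 0 t
    rw [heq]
    exact hzero ▸ hsum
  exact is_const_of_deriv_eq_zero (fun t => (hF t).differentiableAt)
    (fun t => (hF t).deriv) t0 t1
end

section
/- Define F : ℝ × ℝⁿ → ℝ by F(t, z) = f₀(ψ(t, z)) / det(D_zφ(t, ψ(t, z))) (equivalently, F(t, φ(t, z₀)) · det(D_zφ(t, z₀)) = f₀(z₀) for all z₀), i.e. F is the initial density f₀ transported by the flow as a density. Then F is C¹ and satisfies the continuity equation ∂_t F(t, z) + Σᵢ ∂_{zᵢ}(F(t, z) uᵢ(t, z)) = 0 for all (t, z). -/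
open scoped BigOperators

noncomputable def detCML (n : ℕ) : ContinuousMultilinearMap ℝ (fun _ : Fin n => Fin n → ℝ) ℝ :=
  MultilinearMap.mkContinuous
    (Matrix.detRowAlternating (n := Fin n) (R := ℝ)).toMultilinearMap (n.factorial) (by
      intro m
      have key : Matrix.detRowAlternating (R := ℝ) (n := Fin n) (Matrix.of fun i j => m i j)
          = ∑ σ : Equiv.Perm (Fin n), Equiv.Perm.sign σ • ∏ i, m (σ i) i := by
        rw [show (Matrix.detRowAlternating (R := ℝ) (n := Fin n) (Matrix.of fun i j => m i j))
          = (Matrix.of fun i j => m i j).det from rfl, Matrix.det_apply]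
        rfl
      calc ‖Matrix.detRowAlternating.toMultilinearMap m‖
          = ‖∑ σ : Equiv.Perm (Fin n), Equiv.Perm.sign σ • ∏ i, m (σ i) i‖ := by
            exact congrArg _ key
        _ ≤ ∑ σ : Equiv.Perm (Fin n), ‖Equiv.Perm.sign σ • ∏ i, m (σ i) i‖ := norm_sum_le _ _
        _ ≤ ∑ _σ : Equiv.Perm (Fin n), ∏ i, ‖m i‖ := by
            refine Finset.sum_le_sum fun σ _ => ?_
            have h1 : ‖Equiv.Perm.sign σ • ∏ i, m (σ i) i‖ = ‖∏ i, m (σ i) i‖ := by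
              rcases Int.units_eq_one_or (Equiv.Perm.sign σ) with h | h <;> simp [h]
            rw [h1]
            calc ‖∏ i, m (σ i) i‖ ≤ ∏ i, ‖m (σ i)‖ := by
                  rw [Real.norm_eq_abs, Finset.abs_prod]
                  exact Finset.prod_le_prod (fun _ _ => abs_nonneg _)
                    (fun i _ => by simpa using norm_le_pi_norm (m (σ i)) i)
              _ = ∏ i, ‖m i‖ := Equiv.prod_comp σ (fun j => ‖m j‖)
        _ = (n.factorial : ℝ) * ∏ i, ‖m i‖ := by
            rw [Finset.sum_const, Finset.card_univ, Fintype.card_perm]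
            simp [nsmul_eq_mul])

lemma detCML_apply {n : ℕ} (m : Fin n → Fin n → ℝ) :
    detCML n m = Matrix.det (Matrix.of m) := rfl

lemma contDiff_det_of_entries {n : ℕ} {E : Type*} [NormedAddCommGroup E] [NormedSpace ℝ E]
    {A : E → Matrix (Fin n) (Fin n) ℝ} {m : ℕ∞}
    (hA : ∀ i j, ContDiff ℝ m fun p => A p i j) :
    ContDiff ℝ m fun p => (A p).det := by
  have h : (fun p => (A p).det) = fun p => detCML n (fun i => A p i) := rfl
  rw [h]
  exact (detCML n).contDiff.comp (contDiff_pi.2 fun i => contDiff_pi.2 fun j => hA i j)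

lemma hasDerivAt_det_aux {n : ℕ} {A : ℝ → Matrix (Fin n) (Fin n) ℝ}
    {B : Matrix (Fin n) (Fin n) ℝ} {t : ℝ}
    (h : ∀ i, HasDerivAt (fun τ => A τ i) (B i) t) :
    HasDerivAt (fun τ => (A τ).det) (∑ i, ((A t).updateRow i (B i)).det) t := by
  have hg : ∀ i, HasFDerivAt (fun τ => A τ i)
      ((1 : ℝ →L[ℝ] ℝ).smulRight (B i)) t := fun i => (h i).hasFDerivAt
  have H2 := (HasFDerivAt.multilinear_comp (detCML n) hg).hasDerivAt
  refine H2.congr_deriv (Eq.symm ?_)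
  refine (Finset.sum_congr rfl fun i _ => ?_).trans
    (ContinuousLinearMap.sum_apply _ _ _).symm
  simp only [ContinuousLinearMap.comp_apply, ContinuousLinearMap.smulRight_apply,
    ContinuousLinearMap.one_apply, one_smul,
    ContinuousMultilinearMap.toContinuousLinearMap_apply]
  rw [detCML_apply]
  rfl

lemma sum_det_updateRow_eq {n : ℕ} (A B : Matrix (Fin n) (Fin n) ℝ) (hA : A.det ≠ 0) :
    ∑ i, (A.updateRow i (B i)).det = A.det * (B * A⁻¹).trace := by
  have hAu : IsUnit A.det := isUnit_iff_ne_zero.mpr hA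
  set C := B * A⁻¹ with hC
  have hB : B = C * A := by rw [hC, Matrix.mul_assoc, Matrix.nonsing_inv_mul A hAu, Matrix.mul_one]
  have hrow : ∀ i, B i = ∑ k, C i k • A k := by
    intro i; funext j
    rw [hB]
    simp [Matrix.mul_apply, Finset.sum_apply]
  calc ∑ i, (A.updateRow i (B i)).det
      = ∑ i, (A.updateRow i (∑ k, C i k • A k)).det := by
        refine Finset.sum_congr rfl fun i _ => by rw [hrow i]
    _ = ∑ i, C i i • A.det := by
        refine Finset.sum_congr rfl fun i _ => Matrix.det_updateRow_sum A i (C i)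
    _ = A.det * C.trace := by
        rw [Matrix.trace, Finset.mul_sum]
        refine Finset.sum_congr rfl fun i _ => by rw [smul_eq_mul, mul_comm]; rfl

section helpers
variable {E F W : Type*} [NormedAddCommGroup E] [NormedSpace ℝ E]
  [NormedAddCommGroup F] [NormedSpace ℝ F] [NormedAddCommGroup W] [NormedSpace ℝ W]

lemma fderiv_mk_right {f : E × F → W} {t : E} {z : F}
    (hf : DifferentiableAt ℝ f (t, z)) :
    fderiv ℝ (fun y => f (t, y)) z = (fderiv ℝ f (t, z)).comp (ContinuousLinearMap.inr ℝ E F) :=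
  (hf.hasFDerivAt.comp z (hasFDerivAt_prodMk_right t z)).fderiv

lemma hasDerivAt_mk_left {f : ℝ × F → W} {t : ℝ} {z : F}
    (hf : DifferentiableAt ℝ f (t, z)) :
    HasDerivAt (fun τ => f (τ, z)) (fderiv ℝ f (t, z) (1, 0)) t := by
  have hc : HasDerivAt (fun τ : ℝ => (τ, z)) ((1 : ℝ), (0 : F)) t :=
    (hasDerivAt_id t).prodMk (hasDerivAt_const t z)
  exact hf.hasFDerivAt.comp_hasDerivAt t hc

lemma clm_apply_eq_sum {n : ℕ} (L : (Fin n → ℝ) →L[ℝ] W) (w : Fin n → ℝ) :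
    L w = ∑ i, w i • L (Pi.single i 1) := by
  have h : w = ∑ i, (w i) • (Pi.single i (1:ℝ) : Fin n → ℝ) := by
    funext j
    simp [Finset.sum_apply, Pi.single_apply]
  conv_lhs => rw [h]
  rw [map_sum]
  exact Finset.sum_congr rfl fun i _ => by rw [map_smul]

lemma fderiv_pi_comp_proj {n : ℕ} {f : E → (Fin n → ℝ)} {z : E}
    (hf : DifferentiableAt ℝ f z) (i : Fin n) (v : E) :
    fderiv ℝ (fun y => f y i) z v = fderiv ℝ f z v i := by
  have h := ((ContinuousLinearMap.proj (R := ℝ) (φ := fun _ : Fin n => ℝ) i).hasFDerivAt.comp z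
    hf.hasFDerivAt).fderiv
  rw [show (fun y => f y i) = (fun w : Fin n → ℝ => w i) ∘ f from rfl]
  rw [show (fun w : Fin n → ℝ => w i) = (ContinuousLinearMap.proj (R := ℝ)
    (φ := fun _ : Fin n => ℝ) i) from rfl, h]
  rfl

lemma fderiv_clm_apply_const {f : E → (F →L[ℝ] W)} {x : E}
    (hf : DifferentiableAt ℝ f x) (v : F) (w : E) :
    fderiv ℝ (fun p => f p v) x w = fderiv ℝ f x w v := by
  rw [fderiv_clm_apply hf (differentiableAt_const v)]
  simp

end helpers

/-- the initial density `f₀` transported by the flow `φ` of `u` as a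
density, `F(t, φ(t,z₀)) · det(D_zφ(t,z₀)) = f₀(z₀)`, i.e.
`F(t,z) = f₀(ψ(t,z)) / det(D_zφ(t, ψ(t,z)))` where `ψ(t,·) = φ(t,·)⁻¹`, is C¹ and
satisfies the continuity equation `∂ₜF + Σᵢ ∂_{zᵢ}(F uᵢ) = 0`. -/
theorem stmt19 {n : ℕ}
    (u : ℝ × (Fin n → ℝ) → Fin n → ℝ) (hu : ContDiff ℝ 1 u)
    (φ ψ : ℝ × (Fin n → ℝ) → Fin n → ℝ)
    (hφ : ContDiff ℝ 2 φ) (hψ : ContDiff ℝ 1 ψ)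
    (hflow : ∀ t z, deriv (fun τ => φ (τ, z)) t = u (t, φ (t, z)))
    (hinit : ∀ z, φ (0, z) = z)
    (hinv₁ : ∀ t z, ψ (t, φ (t, z)) = z)
    (hinv₂ : ∀ t z, φ (t, ψ (t, z)) = z)
    (J : ℝ → (Fin n → ℝ) → Matrix (Fin n) (Fin n) ℝ)
    (hJ : ∀ t z, J t z = Matrix.of fun i j => fderiv ℝ (fun y => φ (t, y) i) z (Pi.single j 1))
    (hdet : ∀ t z, (J t z).det ≠ 0)
    (f₀ : (Fin n → ℝ) → ℝ) (hf₀ : ContDiff ℝ 1 f₀)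
    (F : ℝ × (Fin n → ℝ) → ℝ)
    (hF : ∀ t z, F (t, z) = f₀ (ψ (t, z)) / (J t (ψ (t, z))).det) :
    ContDiff ℝ 1 F ∧
      ∀ (t : ℝ) (z : Fin n → ℝ),
        deriv (fun τ => F (τ, z)) t
          + (∑ i : Fin n, fderiv ℝ (fun y => F (t, y) * u (t, y) i) z (Pi.single i 1)) = 0 := by
  have hφ1 : ContDiff ℝ 1 φ := hφ.of_le one_le_two
  -- the uncurried parameter family
  have hUnc : ContDiff ℝ 2
      (Function.uncurry fun (p : ℝ × (Fin n → ℝ)) (y : Fin n → ℝ) => φ (p.1, y)) :=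
    hφ.comp ((contDiff_fst.fst).prodMk contDiff_snd)
  have hDφψ : ContDiff ℝ 1 fun p : ℝ × (Fin n → ℝ) => fderiv ℝ (fun y => φ (p.1, y)) (ψ p) :=
    ContDiff.fderiv hUnc hψ (by norm_num)
  have hφt : ∀ t : ℝ, ContDiff ℝ 2 (fun y => φ (t, y)) :=
    fun t => hφ.comp (contDiff_const.prodMk contDiff_id)
  have hJ' : ∀ (t : ℝ) (z : Fin n → ℝ) (i j : Fin n),
      J t z i j = fderiv ℝ (fun y => φ (t, y)) z (Pi.single j 1) i := by
    intro t z i j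
    rw [hJ]
    simp only [Matrix.of_apply]
    exact fderiv_pi_comp_proj (((hφt t).differentiable (by norm_num)) z) i _
  -- C¹ of F
  have hdetψ : ContDiff ℝ 1 fun p : ℝ × (Fin n → ℝ) => (J p.1 (ψ p)).det := by
    apply contDiff_det_of_entries
    intro i j
    have h1 : (fun p : ℝ × (Fin n → ℝ) => J p.1 (ψ p) i j)
        = fun p => fderiv ℝ (fun y => φ (p.1, y)) (ψ p) (Pi.single j 1) i :=
      funext fun p => hJ' _ _ i j
    rw [h1]
    exact contDiff_pi.mp (hDφψ.clm_apply contDiff_const) i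
  have hFeq : F = fun p : ℝ × (Fin n → ℝ) => f₀ (ψ p) / (J p.1 (ψ p)).det :=
    funext fun p => hF p.1 p.2
  have hFC1 : ContDiff ℝ 1 F := by
    rw [hFeq]
    exact (hf₀.comp hψ).div hdetψ (fun p => hdet p.1 (ψ p))
  refine ⟨hFC1, ?_⟩
  intro t z
  set z₀ : Fin n → ℝ := ψ (t, z) with hz₀
  have hφz₀ : φ (t, z₀) = z := hinv₂ t z
  set Du : Matrix (Fin n) (Fin n) ℝ :=
    Matrix.of fun i k => fderiv ℝ (fun y => u (t, y) i) z (Pi.single k 1) with hDu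
  have hut : ContDiff ℝ 1 fun y => u (t, y) := hu.comp (contDiff_const.prodMk contDiff_id)
  -- flow curve derivative
  have hφcurve : ∀ (s : ℝ) (y : Fin n → ℝ),
      HasDerivAt (fun τ => φ (τ, y)) (u (s, φ (s, y))) s := by
    intro s y
    have hd : DifferentiableAt ℝ (fun τ => φ (τ, y)) s :=
      ((hφ1.comp ((contDiff_id).prodMk contDiff_const)).differentiable (by norm_num)) s
    have h2 := hd.hasDerivAt
    rwa [hflow s y] at h2
  -- derivative of entries of J in time
  have hJentry : ∀ i j : Fin n,
      HasDerivAt (fun τ => J τ z₀ i j) ((Du * J t z₀) i j) t := by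
    intro i j
    set Φ : ℝ × (Fin n → ℝ) → ℝ := fun p => φ p i with hΦdef
    have hΦ2 : ContDiff ℝ 2 Φ := contDiff_pi.mp hφ i
    have hΦ' : ContDiff ℝ 1 (fderiv ℝ Φ) := hΦ2.fderiv_right (by norm_num)
    have hsymm : IsSymmSndFDerivAt ℝ Φ (t, z₀) :=
      hΦ2.contDiffAt.isSymmSndFDerivAt (by norm_num)
    -- entries as full fderiv
    have hJr : ∀ τ : ℝ, J τ z₀ i j
        = fderiv ℝ Φ (τ, z₀) ((0 : ℝ), (Pi.single j 1 : Fin n → ℝ)) := by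
      intro τ
      rw [hJ]
      show fderiv ℝ (fun y => Φ (τ, y)) z₀ (Pi.single j 1) = _
      rw [fderiv_mk_right ((hΦ2.differentiable (by norm_num)) (τ, z₀))]
      rfl
    -- derivative of τ ↦ fderiv Φ (τ,z₀) (0, e j)
    have hdd : DifferentiableAt ℝ
        (fun p => fderiv ℝ Φ p ((0 : ℝ), (Pi.single j 1 : Fin n → ℝ))) (t, z₀) :=
      ((hΦ'.clm_apply contDiff_const).differentiable (by norm_num)) (t, z₀)
    have hK : HasDerivAt (fun τ => fderiv ℝ Φ (τ, z₀) ((0:ℝ), (Pi.single j 1 : Fin n → ℝ)))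
        (fderiv ℝ (fun p => fderiv ℝ Φ p ((0:ℝ), (Pi.single j 1 : Fin n → ℝ))) (t, z₀) (1, 0))
        t := hasDerivAt_mk_left hdd
    have hΦd : DifferentiableAt ℝ (fderiv ℝ Φ) (t, z₀) := (hΦ'.differentiable (by norm_num)) (t, z₀)
    -- compute derivative value by symmetry of second derivative
    have hswap : fderiv ℝ (fun p => fderiv ℝ Φ p ((0:ℝ), (Pi.single j 1 : Fin n → ℝ)))
          (t, z₀) (1, 0)
        = fderiv ℝ (fun p => fderiv ℝ Φ p ((1:ℝ), (0 : Fin n → ℝ))) (t, z₀)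
            ((0:ℝ), (Pi.single j 1 : Fin n → ℝ)) := by
      rw [fderiv_clm_apply_const hΦd, fderiv_clm_apply_const hΦd]
      exact hsymm _ _
    -- the time derivative of Φ is u ∘ flow
    have hflowΦ : ∀ p : ℝ × (Fin n → ℝ),
        fderiv ℝ Φ p ((1:ℝ), (0 : Fin n → ℝ)) = u (p.1, φ p) i := by
      intro p
      have h1 : HasDerivAt (fun τ => Φ (τ, p.2)) (fderiv ℝ Φ (p.1, p.2) (1, 0)) p.1 :=
        hasDerivAt_mk_left ((hΦ2.differentiable (by norm_num)) (p.1, p.2))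
      have h2 : HasDerivAt (fun τ => Φ (τ, p.2)) (u (p.1, φ (p.1, p.2)) i) p.1 :=
        hasDerivAt_pi.mp (hφcurve p.1 p.2) i
      have h3 := h1.unique h2
      simpa using h3
    have hcompu : ContDiff ℝ 1 fun p : ℝ × (Fin n → ℝ) => u (p.1, φ p) i :=
      contDiff_pi.mp (hu.comp (contDiff_fst.prodMk hφ1)) i
    have hval : fderiv ℝ (fun p => fderiv ℝ Φ p ((1:ℝ), (0 : Fin n → ℝ))) (t, z₀)
          ((0:ℝ), (Pi.single j 1 : Fin n → ℝ))
        = fderiv ℝ (fun y => u (t, φ (t, y)) i) z₀ (Pi.single j 1) := by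
      have hfun : (fun p : ℝ × (Fin n → ℝ) => fderiv ℝ Φ p ((1:ℝ), (0 : Fin n → ℝ)))
          = fun p => u (p.1, φ p) i := funext hflowΦ
      rw [hfun,
        fderiv_mk_right (f := fun p : ℝ × (Fin n → ℝ) => u (p.1, φ p) i)
          ((hcompu.differentiable (by norm_num)) (t, z₀))]
      rfl
    -- chain rule to produce Du * J
    have hchain : fderiv ℝ (fun y => u (t, φ (t, y)) i) z₀ (Pi.single j 1)
        = (Du * J t z₀) i j := by
      have hg : DifferentiableAt ℝ (fun y => φ (t, y)) z₀ :=
        ((hφt t).differentiable (by norm_num)) z₀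
      have hui : DifferentiableAt ℝ (fun x => u (t, x) i) z :=
        ((contDiff_pi.mp hut i).differentiable (by norm_num)) z
      have hcompeq : (fun y => u (t, φ (t, y)) i)
          = (fun x => u (t, x) i) ∘ (fun y => φ (t, y)) := rfl
      rw [hcompeq, fderiv_comp z₀ (by rwa [hφz₀]) hg]
      rw [ContinuousLinearMap.comp_apply]
      have hw : ∀ k, fderiv ℝ (fun y => φ (t, y)) z₀ (Pi.single j 1) k = J t z₀ k j :=
        fun k => (hJ' t z₀ k j).symm
      rw [show fderiv ℝ (fun x => u (t, x) i) (φ (t, z₀)) = fderiv ℝ (fun x => u (t, x) i) z by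
        rw [hφz₀]]
      rw [clm_apply_eq_sum (fderiv ℝ (fun x => u (t, x) i) z)
        (fderiv ℝ (fun y => φ (t, y)) z₀ (Pi.single j 1))]
      rw [Matrix.mul_apply]
      refine Finset.sum_congr rfl fun k _ => ?_
      rw [hw k, smul_eq_mul, mul_comm]
      rfl
    -- put it together
    have hfun2 : (fun τ => J τ z₀ i j)
        = fun τ => fderiv ℝ Φ (τ, z₀) ((0:ℝ), (Pi.single j 1 : Fin n → ℝ)) := funext hJr
    rw [hfun2]
    have := hK
    rwa [hswap, hval, hchain] at this
  -- row derivative of J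
  have hJrow : ∀ i, HasDerivAt (fun τ => J τ z₀ i) ((Du * J t z₀) i) t :=
    fun i => hasDerivAt_pi.mpr (fun j => hJentry i j)
  -- Liouville formula
  have hdetd : HasDerivAt (fun τ => (J τ z₀).det) ((J t z₀).det * Du.trace) t := by
    have h1 := hasDerivAt_det_aux (A := fun τ => J τ z₀) (B := Du * J t z₀) hJrow
    have h2 : Du * J t z₀ * (J t z₀)⁻¹ = Du := by
      rw [Matrix.mul_assoc, Matrix.mul_nonsing_inv _ (isUnit_iff_ne_zero.mpr (hdet t z₀)),
        Matrix.mul_one]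
    rwa [sum_det_updateRow_eq _ _ (hdet t z₀), h2] at h1
  -- derivative of F along the flow
  have hFdiff : DifferentiableAt ℝ F (t, z) := (hFC1.differentiable (by norm_num)) (t, z)
  have hFd : HasDerivAt (fun τ => F (τ, φ (τ, z₀))) (fderiv ℝ F (t, z) (1, u (t, z))) t := by
    have hcurve : HasDerivAt (fun τ : ℝ => (τ, φ (τ, z₀))) ((1:ℝ), u (t, z)) t := by
      refine (hasDerivAt_id t).prodMk ?_
      have := hφcurve t z₀
      rwa [hφz₀] at this
    have hFdiff' : DifferentiableAt ℝ F (t, φ (t, z₀)) := by rwa [hφz₀]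
    have h := hFdiff'.hasFDerivAt.comp_hasDerivAt t hcurve
    rwa [hφz₀] at h
  -- the transported density is constant in time
  have hconst : ∀ τ : ℝ, F (τ, φ (τ, z₀)) * (J τ z₀).det = f₀ z₀ := by
    intro τ
    rw [hF τ (φ (τ, z₀)), hinv₁ τ z₀, div_mul_cancel₀ _ (hdet τ z₀)]
  have hmul := hFd.mul hdetd
  have hzero : HasDerivAt (fun τ => F (τ, φ (τ, z₀)) * (J τ z₀).det) 0 t := by
    rw [funext hconst]
    exact hasDerivAt_const _ _
  have key := hmul.unique hzero
  rw [hφz₀] at key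
  -- key : D₁ * det + F (t,z) * (det * tr) = 0
  have hkey2 : fderiv ℝ F (t, z) (1, u (t, z)) + F (t, z) * Du.trace = 0 := by
    have h2 : (fderiv ℝ F (t, z) (1, u (t, z)) + F (t, z) * Du.trace) * (J t z₀).det = 0 := by
      linear_combination key
    exact (mul_eq_zero.mp h2).resolve_right (hdet t z₀)
  -- rewrite the goal
  have hdt : deriv (fun τ => F (τ, z)) t = fderiv ℝ F (t, z) (1, 0) :=
    (hasDerivAt_mk_left hFdiff).deriv
  have hFt : DifferentiableAt ℝ (fun y => F (t, y)) z :=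
    ((hFC1.comp (contDiff_const.prodMk contDiff_id)).differentiable (by norm_num)) z
  have hterm : ∀ i : Fin n, fderiv ℝ (fun y => F (t, y) * u (t, y) i) z (Pi.single i 1)
      = fderiv ℝ (fun y => F (t, y)) z (Pi.single i 1) * u (t, z) i + F (t, z) * Du i i := by
    intro i
    have hui : DifferentiableAt ℝ (fun y => u (t, y) i) z :=
      ((contDiff_pi.mp hut i).differentiable (by norm_num)) z
    rw [fderiv_fun_mul hFt hui]
    simp only [ContinuousLinearMap.add_apply, ContinuousLinearMap.coe_smul',
      Pi.smul_apply, smul_eq_mul]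
    rw [hDu]
    simp only [Matrix.of_apply]
    ring
  have hsplit : fderiv ℝ F (t, z) (1, u (t, z))
      = fderiv ℝ F (t, z) (1, 0) + fderiv ℝ (fun y => F (t, y)) z (u (t, z)) := by
    have h1 : ((1:ℝ), u (t, z)) = ((1:ℝ), (0 : Fin n → ℝ)) + ((0:ℝ), u (t, z)) := by
      simp
    rw [h1, map_add]
    congr 1
    rw [fderiv_mk_right hFdiff]
    rfl
  have hsum2 : fderiv ℝ (fun y => F (t, y)) z (u (t, z))
      = ∑ i, fderiv ℝ (fun y => F (t, y)) z (Pi.single i 1) * u (t, z) i := by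
    rw [clm_apply_eq_sum (fderiv ℝ (fun y => F (t, y)) z) (u (t, z))]
    exact Finset.sum_congr rfl fun i _ => by rw [smul_eq_mul, mul_comm]
  calc deriv (fun τ => F (τ, z)) t
        + (∑ i : Fin n, fderiv ℝ (fun y => F (t, y) * u (t, y) i) z (Pi.single i 1))
      = fderiv ℝ F (t, z) (1, 0)
        + (∑ i, (fderiv ℝ (fun y => F (t, y)) z (Pi.single i 1) * u (t, z) i
            + F (t, z) * Du i i)) := by
        rw [hdt]
        exact congrArg _ (Finset.sum_congr rfl fun i _ => hterm i)
    _ = fderiv ℝ F (t, z) (1, u (t, z)) + F (t, z) * Du.trace := by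
        rw [Finset.sum_add_distrib, hsplit, hsum2, Matrix.trace, Finset.mul_sum]
        simp only [Matrix.diag_apply]
        ring
    _ = 0 := hkey2
end
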